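/- Let d be a positive integer, α ∈ (0,2), s ∈ [0,d], and let β > 0 satisfy β > α/(d − s + α), i.e. 1/β + s/α < (d+α)/α. Let μ be a nonzero finite Borel measure on ℝ^d with compact support S satisfying condition (F2)-s with constant C̲, and let k > 0. Then: (i) for every x ∈ S, h_k(t,x) → ∞ as t ↓ 0; and (ii) for every ρ > 0, sup{ h_k(t,x) : x ∈ ℝ^d, d(x,S) ≥ ρ } → 0 as t ↓ 0. -/

import Mathlib

open MeasureTheory Metric Set Filter Topology

/-- The profile function `W(r) = log(e + r²)/(1 + r^{d+α})`. -/
noncomputable def Wfn (d : ℕ) (α r : ℝ) : ℝ :=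
  Real.log (Real.exp 1 + r ^ 2) / (1 + r ^ ((d : ℝ) + α))

/-- `w_t(x) = t^{-1/β}(1 + t^{-s/α}) W(t^{-1/α}|x|)`. -/
noncomputable def wfn (d : ℕ) (α β s t : ℝ) (x : EuclideanSpace ℝ (Fin d)) : ℝ :=
  t ^ (-(1:ℝ)/β) * (1 + t ^ (-s/α)) * Wfn d α (t ^ (-(1:ℝ)/α) * ‖x‖)

/-- `h_k(t,x) = k ∫ w_t(x - y) dμ(y)`. -/
noncomputable def hfn (d : ℕ) (α β s : ℝ) (μ : Measure (EuclideanSpace ℝ (Fin d)))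
    (k t : ℝ) (x : EuclideanSpace ℝ (Fin d)) : ℝ :=
  k * ∫ y, wfn d α β s t (x - y) ∂μ

/-- `S` is the closed support of `μ`. -/
def IsSupportOf (d : ℕ) (μ : Measure (EuclideanSpace ℝ (Fin d)))
    (S : Set (EuclideanSpace ℝ (Fin d))) : Prop :=
  IsClosed S ∧ μ Sᶜ = 0 ∧ ∀ x ∈ S, ∀ r : ℝ, 0 < r → 0 < μ (ball x r)

/-- Condition (F2)-s with constant `Cund` on the set `S`. -/
def IsF2 (d : ℕ) (μ : Measure (EuclideanSpace ℝ (Fin d)))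
    (S : Set (EuclideanSpace ℝ (Fin d))) (Cund s : ℝ) : Prop :=
  ∀ x ∈ S, ∀ r : ℝ, 0 < r → r ≤ 1 →
    ENNReal.ofReal (Cund * r ^ s) ≤ μ (closedBall x r)

lemma log_aux {δ r : ℝ} (hδ : 0 < δ) (hr : 1 ≤ r) :
    Real.log (Real.exp 1 + r ^ 2) ≤ (2 + 2/δ) * r ^ δ := by
  have hr0 : 0 < r := lt_of_lt_of_le one_pos hr
  have h1 : Real.exp 1 + r ^ 2 ≤ (Real.exp 1 + 1) * r ^ 2 := by
    have : (1:ℝ) ≤ r ^ 2 := one_le_pow₀ hr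
    nlinarith [Real.exp_pos 1]
  have h2 : Real.log (Real.exp 1 + r ^ 2) ≤ Real.log (Real.exp 1 + 1) + 2 * Real.log r := by
    calc Real.log (Real.exp 1 + r ^ 2) ≤ Real.log ((Real.exp 1 + 1) * r ^ 2) := by
          apply Real.log_le_log (by positivity) h1
      _ = Real.log (Real.exp 1 + 1) + 2 * Real.log r := by
          rw [Real.log_mul (by positivity) (by positivity), Real.log_pow]; ring
  have h3 : Real.log (Real.exp 1 + 1) ≤ 2 := by
    have : Real.exp 1 + 1 ≤ Real.exp 2 := by
      have h := Real.add_one_le_exp 1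
      have : Real.exp 2 = Real.exp 1 * Real.exp 1 := by
        rw [← Real.exp_add]; norm_num
      nlinarith [Real.exp_pos 1]
    calc Real.log (Real.exp 1 + 1) ≤ Real.log (Real.exp 2) := Real.log_le_log (by positivity) this
      _ = 2 := Real.log_exp 2
  have h4 : Real.log r ≤ r ^ δ / δ := by
    have : δ * Real.log r ≤ r ^ δ - 1 := by
      rw [← Real.log_rpow hr0]
      exact Real.log_le_sub_one_of_pos (Real.rpow_pos_of_pos hr0 δ)
    have h5 : r ^ δ - 1 ≤ r ^ δ := by linarith
    rw [le_div_iff₀ hδ]; linarith [mul_comm δ (Real.log r)]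
  have h6 : (1:ℝ) ≤ r ^ δ := Real.one_le_rpow hr hδ.le
  calc Real.log (Real.exp 1 + r ^ 2) ≤ 2 + 2 * (r ^ δ / δ) := by linarith
    _ ≤ (2 + 2/δ) * r ^ δ := by
        have : 2 * (r ^ δ / δ) = (2/δ) * r ^ δ := by ring
        nlinarith

lemma Wfn_nonneg {d : ℕ} {α r : ℝ} (hr : 0 ≤ r) : 0 ≤ Wfn d α r := by
  unfold Wfn
  apply div_nonneg
  · apply Real.log_nonneg; nlinarith [Real.add_one_le_exp 1, sq_nonneg r]
  · positivity

lemma Wfn_le_four {d : ℕ} {α r : ℝ} (hda : 1 ≤ (d:ℝ) + α) (hr : 0 ≤ r) :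
    Wfn d α r ≤ 4 := by
  unfold Wfn
  have hden : (0:ℝ) < 1 + r ^ ((d:ℝ) + α) := by positivity
  rcases le_or_gt r 1 with h | h
  · have hnum : Real.log (Real.exp 1 + r ^ 2) ≤ 2 := by
      have : Real.exp 1 + r ^ 2 ≤ Real.exp 2 := by
        have h1 := Real.add_one_le_exp 1
        have h2 : Real.exp 2 = Real.exp 1 * Real.exp 1 := by rw [← Real.exp_add]; norm_num
        nlinarith [Real.exp_pos 1, sq_nonneg r]
      calc Real.log (Real.exp 1 + r ^ 2) ≤ Real.log (Real.exp 2) :=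
            Real.log_le_log (by positivity) this
        _ = 2 := Real.log_exp 2
    have hnn : 0 ≤ Real.log (Real.exp 1 + r ^ 2) := by
      apply Real.log_nonneg; nlinarith [Real.add_one_le_exp 1, sq_nonneg r]
    calc Real.log (Real.exp 1 + r ^ 2) / (1 + r ^ ((d:ℝ)+α))
        ≤ Real.log (Real.exp 1 + r ^ 2) / 1 := by
          apply div_le_div_of_nonneg_left hnn one_pos
          nlinarith [Real.rpow_nonneg hr ((d:ℝ)+α)]
      _ ≤ 4 := by linarith
  · have hδ : (0:ℝ) < (d:ℝ) + α := lt_of_lt_of_le one_pos hda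
    have hnum := log_aux hδ h.le
    have hC : 2 + 2/((d:ℝ)+α) ≤ 4 := by
      have : 2/((d:ℝ)+α) ≤ 2 := by
        rw [div_le_iff₀ hδ]; nlinarith
      linarith
    rw [div_le_iff₀ hden]
    have hpow : (0:ℝ) ≤ r ^ ((d:ℝ)+α) := Real.rpow_nonneg hr _
    nlinarith [Real.rpow_nonneg hr ((d:ℝ)+α)]

lemma Wfn_ge_half {d : ℕ} {α r : ℝ} (hda : 0 < (d:ℝ) + α) (hr0 : 0 ≤ r) (hr1 : r ≤ 1) :
    1/2 ≤ Wfn d α r := by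
  unfold Wfn
  have hnum : (1:ℝ) ≤ Real.log (Real.exp 1 + r ^ 2) := by
    calc (1:ℝ) = Real.log (Real.exp 1) := (Real.log_exp 1).symm
      _ ≤ Real.log (Real.exp 1 + r ^ 2) := Real.log_le_log (Real.exp_pos 1) (by nlinarith)
  have hden : 1 + r ^ ((d:ℝ)+α) ≤ 2 := by
    have := Real.rpow_le_one hr0 hr1 hda.le
    linarith
  have hdenpos : (0:ℝ) < 1 + r ^ ((d:ℝ)+α) := by positivity
  rw [le_div_iff₀ hdenpos]; linarith

lemma Wfn_decay {d : ℕ} {α δ r : ℝ} (hδ : 0 < δ) (hr : 1 ≤ r) :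
    Wfn d α r ≤ (2 + 2/δ) * r ^ (δ - ((d:ℝ) + α)) := by
  unfold Wfn
  have hr0 : 0 < r := lt_of_lt_of_le one_pos hr
  have hp : (0:ℝ) < r ^ ((d:ℝ)+α) := Real.rpow_pos_of_pos hr0 _
  have hnn : 0 ≤ Real.log (Real.exp 1 + r ^ 2) := by
    apply Real.log_nonneg; nlinarith [Real.add_one_le_exp 1, sq_nonneg r]
  calc Real.log (Real.exp 1 + r ^ 2) / (1 + r ^ ((d:ℝ)+α))
      ≤ Real.log (Real.exp 1 + r ^ 2) / r ^ ((d:ℝ)+α) := by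
        apply div_le_div_of_nonneg_left hnn hp; linarith
    _ ≤ ((2 + 2/δ) * r ^ δ) / r ^ ((d:ℝ)+α) := by
        gcongr
        exact log_aux hδ hr
    _ = (2 + 2/δ) * r ^ (δ - ((d:ℝ)+α)) := by
        rw [Real.rpow_sub hr0]; ring

lemma Wfn_cont {d : ℕ} {α c : ℝ} (hc : 0 ≤ c) (hda : 0 ≤ (d:ℝ) + α) :
    Continuous (fun z : EuclideanSpace ℝ (Fin d) => Wfn d α (c * ‖z‖)) := by
  unfold Wfn
  have hbase : Continuous (fun z : EuclideanSpace ℝ (Fin d) => c * ‖z‖) :=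
    continuous_const.mul continuous_norm
  apply Continuous.div
  · apply Continuous.log
    · exact continuous_const.add (hbase.pow 2)
    · intro z; positivity
  · exact continuous_const.add (hbase.rpow_const (fun z => Or.inr hda))
  · intro z
    have : (0:ℝ) ≤ (c * ‖z‖) ^ ((d:ℝ)+α) := Real.rpow_nonneg (by positivity) _
    positivity

lemma wfn_nonneg {d : ℕ} {α β s t : ℝ} (ht : 0 ≤ t) (z : EuclideanSpace ℝ (Fin d)) :
    0 ≤ wfn d α β s t z := by
  unfold wfn
  have h1 : (0:ℝ) ≤ t ^ (-(1:ℝ)/β) := Real.rpow_nonneg ht _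
  have h2 : (0:ℝ) ≤ t ^ (-s/α) := Real.rpow_nonneg ht _
  have h3 : (0:ℝ) ≤ t ^ (-(1:ℝ)/α) * ‖z‖ := by
    have := Real.rpow_nonneg ht (-(1:ℝ)/α); positivity
  have := Wfn_nonneg (d := d) (α := α) h3
  positivity

lemma wfn_integrable (d : ℕ) {α β s t : ℝ} (hda0 : 0 ≤ (d:ℝ) + α) (hda1 : 1 ≤ (d:ℝ) + α)
    (ht : 0 < t) (μ : Measure (EuclideanSpace ℝ (Fin d))) [IsFiniteMeasure μ]
    (x : EuclideanSpace ℝ (Fin d)) :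
    Integrable (fun y => wfn d α β s t (x - y)) μ := by
  have hc : (0:ℝ) ≤ t ^ (-(1:ℝ)/α) := Real.rpow_nonneg ht.le _
  have hA : (0:ℝ) ≤ t ^ (-(1:ℝ)/β) * (1 + t ^ (-s/α)) := by
    have h1 : (0:ℝ) ≤ t ^ (-(1:ℝ)/β) := Real.rpow_nonneg ht.le _
    have h2 : (0:ℝ) ≤ t ^ (-s/α) := Real.rpow_nonneg ht.le _
    positivity
  have hcont : Continuous (fun y => wfn d α β s t (x - y)) := by
    unfold wfn
    exact continuous_const.mul
      ((Wfn_cont hc hda0).comp (continuous_const.sub continuous_id))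
  refine ⟨hcont.aestronglyMeasurable, ?_⟩
  apply HasFiniteIntegral.of_bounded (C := t ^ (-(1:ℝ)/β) * (1 + t ^ (-s/α)) * 4)
  filter_upwards with y
  rw [Real.norm_eq_abs, abs_le]
  have h0 := wfn_nonneg (α := α) (β := β) (s := s) ht.le (x - y)
  have harg : (0:ℝ) ≤ t ^ (-(1:ℝ)/α) * ‖x - y‖ := by positivity
  have h4 : wfn d α β s t (x - y) ≤ t ^ (-(1:ℝ)/β) * (1 + t ^ (-s/α)) * 4 := by
    unfold wfn
    exact mul_le_mul_of_nonneg_left (Wfn_le_four hda1 harg) hA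
  constructor
  · nlinarith
  · exact h4

set_option maxHeartbeats 1000000

/-- In the supercritical regime `β > α/(d-s+α)`:
(i) `h_k(t,x) → ∞` as `t ↓ 0` for every `x` in the support `S`, and
(ii) `h_k(t,·)` vanishes uniformly on `{x : d(x,S) ≥ ρ}` as `t ↓ 0`, for every `ρ > 0`. -/
theorem stmt_3 (d : ℕ) (hd : 0 < d) (α β s : ℝ) (hα : α ∈ Ioo (0:ℝ) 2)
    (hs : s ∈ Icc (0:ℝ) (d:ℝ)) (hβ : α / ((d:ℝ) - s + α) < β)
    (μ : Measure (EuclideanSpace ℝ (Fin d))) [IsFiniteMeasure μ] (hμ : μ ≠ 0)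
    (S : Set (EuclideanSpace ℝ (Fin d))) (hScpt : IsCompact S)
    (hSsupp : IsSupportOf d μ S)
    (Cund : ℝ) (hCund : 0 < Cund) (hF2 : IsF2 d μ S Cund s)
    (k : ℝ) (hk : 0 < k) :
    (∀ x ∈ S, Tendsto (fun t => hfn d α β s μ k t x) (𝓝[>] (0:ℝ)) atTop) ∧
    (∀ ρ > (0:ℝ), ∀ ε > (0:ℝ), ∀ᶠ t in 𝓝[>] (0:ℝ),
      ∀ x : EuclideanSpace ℝ (Fin d), ρ ≤ infDist x S → hfn d α β s μ k t x < ε) := by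
  obtain ⟨hα0, hα2⟩ := hα
  obtain ⟨hs0, hsd⟩ := hs
  have hd1 : (1:ℝ) ≤ (d:ℝ) := by exact_mod_cast hd
  have hda1 : (1:ℝ) ≤ (d:ℝ) + α := by linarith
  have hda0 : (0:ℝ) < (d:ℝ) + α := by linarith
  have hD : (0:ℝ) < (d:ℝ) - s + α := by linarith
  have hβ0 : 0 < β := lt_trans (by positivity) hβ
  constructor
  · -- part (i)
    intro x hx
    have key : ∀ t : ℝ, t ∈ Ioc (0:ℝ) 1 →
        k * Cund / 2 * t ^ (-(1:ℝ)/β) ≤ hfn d α β s μ k t x := by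
      intro t ht
      obtain ⟨ht0, ht1⟩ := ht
      set r : ℝ := t ^ ((1:ℝ)/α) with hr_def
      have hr0 : 0 < r := Real.rpow_pos_of_pos ht0 _
      have hr1 : r ≤ 1 := Real.rpow_le_one ht0.le ht1 (by positivity)
      have hint := wfn_integrable d (α := α) (β := β) (s := s) hda0.le hda1 ht0 μ x
      set A : ℝ := t ^ (-(1:ℝ)/β) * (1 + t ^ (-s/α)) with hA_def
      have hP : (0:ℝ) < t ^ (-(1:ℝ)/β) := Real.rpow_pos_of_pos ht0 _
      have hQ : (0:ℝ) < t ^ (-s/α) := Real.rpow_pos_of_pos ht0 _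
      have hA0 : 0 < A := by positivity
      -- on the closed ball, wfn ≥ A/2
      have hball : ∀ y ∈ closedBall x r, A * (1/2) ≤ wfn d α β s t (x - y) := by
        intro y hy
        have hdist : ‖x - y‖ ≤ r := by
          rw [← dist_eq_norm]; exact mem_closedBall'.mp hy
        have hprod : t ^ (-(1:ℝ)/α) * ‖x - y‖ ≤ 1 := by
          have hc0 : (0:ℝ) < t ^ (-(1:ℝ)/α) := Real.rpow_pos_of_pos ht0 _
          have : t ^ (-(1:ℝ)/α) * r = 1 := by
            rw [hr_def, ← Real.rpow_add ht0]
            have he : -(1:ℝ)/α + 1/α = 0 := by ring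
            rw [he, Real.rpow_zero]
          calc t ^ (-(1:ℝ)/α) * ‖x - y‖ ≤ t ^ (-(1:ℝ)/α) * r := by
                exact mul_le_mul_of_nonneg_left hdist hc0.le
            _ = 1 := this
        have harg0 : (0:ℝ) ≤ t ^ (-(1:ℝ)/α) * ‖x - y‖ := by
          have := Real.rpow_nonneg ht0.le (-(1:ℝ)/α); positivity
        have := Wfn_ge_half (d := d) (α := α) hda0 harg0 hprod
        unfold wfn
        rw [← hA_def]
        exact mul_le_mul_of_nonneg_left this hA0.le
      have hmeas : Cund * r ^ s ≤ (μ (closedBall x r)).toReal := by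
        have h := hF2 x hx r hr0 hr1
        exact (ENNReal.ofReal_le_iff_le_toReal (measure_ne_top μ _)).mp h
      have step2 : A * (1/2) * (μ (closedBall x r)).toReal ≤
          ∫ y in closedBall x r, wfn d α β s t (x - y) ∂μ :=
        setIntegral_ge_of_const_le_real measurableSet_closedBall (measure_ne_top μ _)
          hball hint.integrableOn
      have step1 : ∫ y in closedBall x r, wfn d α β s t (x - y) ∂μ ≤
          ∫ y, wfn d α β s t (x - y) ∂μ :=
        setIntegral_le_integral hint (Eventually.of_forall fun y => wfn_nonneg ht0.le _)
      have hrs : 0 < r ^ s := Real.rpow_pos_of_pos hr0 _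
      have hchain : A * (1/2) * (Cund * r ^ s) ≤ ∫ y, wfn d α β s t (x - y) ∂μ := by
        calc A * (1/2) * (Cund * r ^ s) ≤ A * (1/2) * (μ (closedBall x r)).toReal := by
              apply mul_le_mul_of_nonneg_left hmeas (by positivity)
          _ ≤ _ := le_trans step2 step1
      -- A * r^s ≥ t^{-1/β}
      have hkey : t ^ (-(1:ℝ)/β) ≤ A * r ^ s := by
        have hid : t ^ (-s/α) * r ^ s = 1 := by
          rw [hr_def, ← Real.rpow_mul ht0.le, ← Real.rpow_add ht0]
          have he : -s/α + 1/α * s = 0 := by ring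
          rw [he, Real.rpow_zero]
        have hexp : A * r ^ s = t ^ (-(1:ℝ)/β) * r ^ s + t ^ (-(1:ℝ)/β) * (t ^ (-s/α) * r ^ s) := by
          rw [hA_def]; ring
        rw [hexp, hid]
        nlinarith
      calc k * Cund / 2 * t ^ (-(1:ℝ)/β) ≤ k * Cund / 2 * (A * r ^ s) := by
            apply mul_le_mul_of_nonneg_left hkey (by positivity)
        _ = k * (A * (1/2) * (Cund * r ^ s)) := by ring
        _ ≤ k * ∫ y, wfn d α β s t (x - y) ∂μ := by
            apply mul_le_mul_of_nonneg_left hchain hk.le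
        _ = hfn d α β s μ k t x := rfl
    -- conclude via tendsto
    have hlim : Tendsto (fun t : ℝ => k * Cund / 2 * t ^ (-(1:ℝ)/β)) (𝓝[>] (0:ℝ)) atTop := by
      have h1 : Tendsto (fun t : ℝ => (t⁻¹) ^ ((1:ℝ)/β)) (𝓝[>] (0:ℝ)) atTop :=
        (tendsto_rpow_atTop (by positivity)).comp tendsto_inv_nhdsGT_zero
      have h2 : Tendsto (fun t : ℝ => t ^ (-(1:ℝ)/β)) (𝓝[>] (0:ℝ)) atTop := by
        apply h1.congr'
        filter_upwards [self_mem_nhdsWithin] with t (ht : 0 < t)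
        rw [Real.inv_rpow ht.le, ← Real.rpow_neg ht.le, neg_div]
      exact h2.const_mul_atTop (by positivity)
    apply tendsto_atTop_mono' _ _ hlim
    filter_upwards [Ioc_mem_nhdsGT_of_mem ⟨le_refl (0:ℝ), zero_lt_one⟩] with t ht
    exact key t ht
  · -- part (ii)
    intro ρ hρ ε hε
    set M := (μ univ).toReal with hM_def
    have hM : 0 ≤ M := ENNReal.toReal_nonneg
    have he0 : (0:ℝ) < ((d:ℝ)+α)/α - (1/β + s/α) := by
      have h1 : α < β * ((d:ℝ) - s + α) := by
        have := (div_lt_iff₀ hD).mp hβ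
        linarith [this]
      have h2 : 1/β < ((d:ℝ)-s+α)/α := by
        rw [div_lt_div_iff₀ hβ0 hα0]
        nlinarith
      have h3 : ((d:ℝ)-s+α)/α + s/α = ((d:ℝ)+α)/α := by
        rw [← add_div]; congr 1; ring
      linarith
    set e0 : ℝ := ((d:ℝ)+α)/α - (1/β + s/α) with he0_def
    set δ : ℝ := α * e0 / 2 with hδ_def
    have hδ0 : 0 < δ := by positivity
    have hE0 : (0:ℝ) < e0/2 := by positivity
    set γ : ℝ := δ - ((d:ℝ)+α) with hγ_def
    have hγ0 : γ ≤ 0 := by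
      have hbs : 0 ≤ 1/β + s/α := by positivity
      have h1 : e0 ≤ ((d:ℝ)+α)/α := by rw [he0_def]; linarith
      have hdm : ((d:ℝ)+α)/α * α = (d:ℝ)+α := div_mul_cancel₀ _ hα0.ne'
      rw [hγ_def, hδ_def]
      nlinarith
    set Cδ : ℝ := 2 + 2/δ with hCδ_def
    have hCδ : 0 < Cδ := by positivity
    have hexp : -(1:ℝ)/β + (-s/α) + (-(1:ℝ)/α)*γ = e0/2 := by
      rw [hγ_def, hδ_def, he0_def]
      field_simp
      ring
    set K : ℝ := k * M * Cδ * 2 * ρ ^ γ with hK_def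
    have hργ : (0:ℝ) < ρ ^ γ := Real.rpow_pos_of_pos hρ _
    have hK0 : 0 ≤ K := by positivity
    have hbound : ∀ t ∈ Ioc (0:ℝ) (min 1 (ρ ^ α)), ∀ x : EuclideanSpace ℝ (Fin d),
        ρ ≤ infDist x S → hfn d α β s μ k t x ≤ K * t ^ (e0/2) := by
      intro t ht x hxS
      obtain ⟨ht0, htm⟩ := ht
      have ht1 : t ≤ 1 := le_trans htm (min_le_left _ _)
      have htρ : t ≤ ρ ^ α := le_trans htm (min_le_right _ _)
      set c : ℝ := t ^ (-(1:ℝ)/α) with hc_def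
      have hc0 : 0 < c := Real.rpow_pos_of_pos ht0 _
      have hR1 : 1 ≤ c * ρ := by
        have ha0 : 0 < t ^ ((1:ℝ)/α) := Real.rpow_pos_of_pos ht0 _
        have ht' : t ^ ((1:ℝ)/α) ≤ ρ := by
          calc t ^ ((1:ℝ)/α) ≤ (ρ ^ α) ^ ((1:ℝ)/α) :=
                Real.rpow_le_rpow ht0.le htρ (by positivity)
            _ = ρ := by
                rw [← Real.rpow_mul hρ.le, mul_one_div_cancel hα0.ne', Real.rpow_one]
        have hcinv : c = (t ^ ((1:ℝ)/α))⁻¹ := by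
          rw [hc_def, neg_div, Real.rpow_neg ht0.le]
        rw [hcinv]
        have : (t ^ ((1:ℝ)/α))⁻¹ * ρ = ρ / t ^ ((1:ℝ)/α) := by ring
        rw [this]
        exact (one_le_div ha0).mpr ht'
      have hint := wfn_integrable d (α := α) (β := β) (s := s) hda0.le hda1 ht0 μ x
      set A : ℝ := t ^ (-(1:ℝ)/β) * (1 + t ^ (-s/α)) with hA_def
      have hP : (0:ℝ) < t ^ (-(1:ℝ)/β) := Real.rpow_pos_of_pos ht0 _
      have hQ : (0:ℝ) < t ^ (-s/α) := Real.rpow_pos_of_pos ht0 _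
      have hA0 : 0 < A := by positivity
      have hae : ∀ᵐ y ∂μ, y ∈ S := by
        rw [ae_iff]
        exact hSsupp.2.1
      have hcb : (0:ℝ) < (c*ρ) ^ γ := Real.rpow_pos_of_pos (by positivity) _
      have hptbd : ∀ᵐ y ∂μ, wfn d α β s t (x - y) ≤ A * (Cδ * (c*ρ) ^ γ) := by
        filter_upwards [hae] with y hyS
        have hdist : ρ ≤ ‖x - y‖ := by
          have h1 : infDist x S ≤ dist x y := infDist_le_dist_of_mem hyS
          rw [dist_eq_norm] at h1
          linarith
        have hr1 : c * ρ ≤ c * ‖x - y‖ := mul_le_mul_of_nonneg_left hdist hc0.le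
        have hrge : 1 ≤ c * ‖x - y‖ := le_trans hR1 hr1
        have hW : Wfn d α (c * ‖x - y‖) ≤ Cδ * (c*ρ) ^ γ := by
          calc Wfn d α (c * ‖x - y‖) ≤ Cδ * (c * ‖x - y‖) ^ γ := by
                rw [hCδ_def, hγ_def]
                exact Wfn_decay hδ0 hrge
            _ ≤ Cδ * (c*ρ) ^ γ := by
                apply mul_le_mul_of_nonneg_left _ hCδ.le
                exact Real.rpow_le_rpow_of_nonpos (by positivity) hr1 hγ0
        show wfn d α β s t (x - y) ≤ A * (Cδ * (c*ρ) ^ γ)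
        unfold wfn
        rw [← hA_def, ← hc_def]
        exact mul_le_mul_of_nonneg_left hW hA0.le
      have hIbd : ∫ y, wfn d α β s t (x - y) ∂μ ≤ A * (Cδ * (c*ρ) ^ γ) * M := by
        calc ∫ y, wfn d α β s t (x - y) ∂μ ≤ ∫ _, A * (Cδ * (c*ρ) ^ γ) ∂μ :=
              integral_mono_ae hint (integrable_const _) hptbd
          _ = M • (A * (Cδ * (c*ρ) ^ γ)) := integral_const _
          _ = A * (Cδ * (c*ρ) ^ γ) * M := by rw [smul_eq_mul]; ring
      have hAle : A ≤ 2 * (t ^ (-(1:ℝ)/β) * t ^ (-s/α)) := by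
        have hQ1 : 1 ≤ t ^ (-s/α) := by
          apply Real.one_le_rpow_of_pos_of_le_one_of_nonpos ht0 ht1
          apply div_nonpos_of_nonpos_of_nonneg (by linarith) hα0.le
        rw [hA_def]
        nlinarith
      have h3 : (c*ρ) ^ γ = t ^ ((-(1:ℝ)/α)*γ) * ρ ^ γ := by
        rw [Real.mul_rpow hc0.le hρ.le, hc_def, ← Real.rpow_mul ht0.le]
      have h4 : t ^ (-(1:ℝ)/β) * t ^ (-s/α) * t ^ ((-(1:ℝ)/α)*γ) = t ^ (e0/2) := by
        rw [← Real.rpow_add ht0, ← Real.rpow_add ht0, hexp]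
      calc hfn d α β s μ k t x = k * ∫ y, wfn d α β s t (x - y) ∂μ := rfl
        _ ≤ k * (A * (Cδ * (c*ρ) ^ γ) * M) := mul_le_mul_of_nonneg_left hIbd hk.le
        _ ≤ k * ((2 * (t ^ (-(1:ℝ)/β) * t ^ (-s/α))) * (Cδ * (c*ρ) ^ γ) * M) := by
            apply mul_le_mul_of_nonneg_left _ hk.le
            apply mul_le_mul_of_nonneg_right _ hM
            exact mul_le_mul_of_nonneg_right hAle (by positivity)
        _ = K * (t ^ (-(1:ℝ)/β) * t ^ (-s/α) * t ^ ((-(1:ℝ)/α)*γ)) := by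
            rw [h3, hK_def]; ring
        _ = K * t ^ (e0/2) := by rw [h4]
    have hlim0 : Tendsto (fun t : ℝ => K * t ^ (e0/2)) (𝓝[>] (0:ℝ)) (𝓝 0) := by
      have h1 : Tendsto (fun t : ℝ => t ^ (e0/2)) (𝓝 (0:ℝ)) (𝓝 0) := by
        have := (Real.continuousAt_rpow_const 0 (e0/2) (Or.inr hE0.le)).tendsto
        rwa [Real.zero_rpow hE0.ne'] at this
      have h2 : Tendsto (fun t : ℝ => K * t ^ (e0/2)) (𝓝[>] (0:ℝ)) (𝓝 (K * 0)) :=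
        (h1.mono_left nhdsWithin_le_nhds).const_mul K
      simpa using h2
    have hev1 : ∀ᶠ t in 𝓝[>] (0:ℝ), K * t ^ (e0/2) < ε :=
      hlim0.eventually (gt_mem_nhds hε)
    have hT : (0:ℝ) < min 1 (ρ ^ α) := lt_min one_pos (Real.rpow_pos_of_pos hρ _)
    filter_upwards [hev1, Ioc_mem_nhdsGT_of_mem ⟨le_refl (0:ℝ), hT⟩] with t h1 h2
    intro x hxS
    exact lt_of_le_of_lt (hbound t h2 x hxS) h1
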